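/- Let r1td, r2td, r1no, r2no, L1, L2 be positive reals with λ := r1no/r1td + r2no/r2td - 1 < 0. Then the optimal value of the LP minimizing t1 + t_no + t2 subject to t1·r1td + t_no·r1no = L1, t2·r2td + t_no·r2no = L2, t1, t2, t_no ≥ 0 equals L1/r1td + L2/r2td, attained uniquely at t_no = 0, tk = Lk/rk_td. -/

import Mathlib

/-- with negative NOMA priority, the LP optimum is the pure-TDMA
value, attained uniquely at `t_no = 0`, `tk = Lk/rk_td`. -/
theorem stmt_3 (r1td r2td r1no r2no L1 L2 : ℝ)
    (hr1td : 0 < r1td) (hr2td : 0 < r2td) (hr1no : 0 < r1no) (hr2no : 0 < r2no)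
    (hL1 : 0 < L1) (hL2 : 0 < L2)
    (hlam : r1no / r1td + r2no / r2td - 1 < 0) :
    IsLeast {v : ℝ | ∃ t1 t2 tno : ℝ, 0 ≤ t1 ∧ 0 ≤ t2 ∧ 0 ≤ tno ∧
        t1 * r1td + tno * r1no = L1 ∧ t2 * r2td + tno * r2no = L2 ∧
        v = t1 + tno + t2}
      (L1 / r1td + L2 / r2td) ∧
    (∀ t1 t2 tno : ℝ, 0 ≤ t1 → 0 ≤ t2 → 0 ≤ tno →
      t1 * r1td + tno * r1no = L1 → t2 * r2td + tno * r2no = L2 →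
      t1 + tno + t2 = L1 / r1td + L2 / r2td →
      tno = 0 ∧ t1 = L1 / r1td ∧ t2 = L2 / r2td) := by
  have h1 := hr1td.ne'
  have h2 := hr2td.ne'
  have key : ∀ t1 t2 tno : ℝ, t1 * r1td + tno * r1no = L1 → t2 * r2td + tno * r2no = L2 →
      t1 + tno + t2 = L1 / r1td + L2 / r2td + tno * (1 - (r1no / r1td + r2no / r2td)) := by
    intro t1 t2 tno hc1 hc2
    have ht1 : t1 = (L1 - tno * r1no) / r1td := by field_simp; linarith
    have ht2 : t2 = (L2 - tno * r2no) / r2td := by field_simp; linarith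
    rw [ht1, ht2]; field_simp; ring
  have hpos : 0 < 1 - (r1no / r1td + r2no / r2td) := by linarith
  refine ⟨⟨⟨L1 / r1td, L2 / r2td, 0, by positivity, by positivity, le_refl _,
      by field_simp; ring, by field_simp; ring, by ring⟩, ?_⟩, ?_⟩
  · rintro v ⟨t1, t2, tno, ht1, ht2, htno, hc1, hc2, rfl⟩
    rw [key t1 t2 tno hc1 hc2]
    nlinarith
  · intro t1 t2 tno ht1 ht2 htno hc1 hc2 heq
    rw [key t1 t2 tno hc1 hc2] at heq
    have htz : tno = 0 := by nlinarith
    subst htz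
    simp at hc1 hc2
    constructor
    · rfl
    constructor
    · field_simp; linarith
    · field_simp; linarith
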